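/- arXiv:1006.4996 — 2 statements merged into one kernel-verified Lean document; each statement's English description precedes it below -/
import Mathlib

section
/- Let p ∈ [1,∞] and q ∈ [1,∞] with 1/p + 1/q = 1, and let g ∈ L^p(Ω,μ). Define G(x) ∈ ℝ^m by G(x)_i = g(x⁽ⁱ⁾). If K_q(Γ) < ∞, then E‖R(X)G(X)‖₂ ≤ √n · m · √(K_q(Γ)) · ‖g‖_{L^p(Ω)}. -/
open MeasureTheory ProbabilityTheory ENNReal Matrix Filter

noncomputable section

/-- The smallest eigenvalue `s₁(A)` of the symmetric positive semidefinite matrix `AᵀA`. -/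
def s1 {m n : ℕ} (A : Matrix (Fin m) (Fin n) ℝ) : ℝ :=
  ⨅ i, (show (Aᵀ * A).IsHermitian by
    simpa using Matrix.isHermitian_conjTranspose_mul_self A).eigenvalues i

/-- Euclidean norm on `ℝ^n`. -/
def enorm2 {n : ℕ} (v : Fin n → ℝ) : ℝ := Real.sqrt (∑ j, v j ^ 2)

/-- The matrix `Γ(x)` with entries `Γ(x)_{ij} = γ_j(x⁽ⁱ⁾)`. -/
def dmat {Ω : Type*} {n m : ℕ} (γ : Fin n → Ω → ℝ) (x : Fin m → Ω) :
    Matrix (Fin m) (Fin n) ℝ := Matrix.of fun i j => γ j (x i)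

/-- The matrix `R(x) = (Γ(x)ᵀΓ(x))⁻¹Γ(x)ᵀ`. -/
def Rmat {Ω : Type*} {n m : ℕ} (γ : Fin n → Ω → ℝ) (x : Fin m → Ω) :
    Matrix (Fin n) (Fin m) ℝ := ((dmat γ x)ᵀ * dmat γ x)⁻¹ * (dmat γ x)ᵀ

/-- `β(x) = R(x) F(x)` where `F(x)_i = f(x⁽ⁱ⁾)`. -/
def betaFn {Ω : Type*} {n m : ℕ} (γ : Fin n → Ω → ℝ) (f : Ω → ℝ) (x : Fin m → Ω) :
    Fin n → ℝ := Rmat γ x *ᵥ fun i => f (x i)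

/-- The residue `ρ(a)(ω) = f(ω) - ∑ j a_j γ_j(ω)`. -/
def resid {Ω : Type*} {n : ℕ} (γ : Fin n → Ω → ℝ) (f : Ω → ℝ) (a : Fin n → ℝ) : Ω → ℝ :=
  fun ω => f ω - ∑ j, a j * γ j ω
section aux

variable {m n : ℕ}

lemma Matrix.isHermitian_transpose_mul_self (A : Matrix (Fin m) (Fin n) ℝ) :
    (Aᵀ * A).IsHermitian := by
  simpa using Matrix.isHermitian_conjTranspose_mul_self A

lemma s1_nonneg (hn : 0 < n) (A : Matrix (Fin m) (Fin n) ℝ) : 0 ≤ s1 A := by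
  haveI : Nonempty (Fin n) := Fin.pos_iff_nonempty.mp hn
  exact le_ciInf fun i => Matrix.eigenvalues_conjTranspose_mul_self_nonneg A i

lemma s1_le (A : Matrix (Fin m) (Fin n) ℝ) (i : Fin n) :
    s1 A ≤ (Matrix.isHermitian_transpose_mul_self A).eigenvalues i :=
  ciInf_le (Set.finite_range _).bddBelow i

lemma exists_s1_eq (hn : 0 < n) (A : Matrix (Fin m) (Fin n) ℝ) :
    ∃ i, (Matrix.isHermitian_transpose_mul_self A).eigenvalues i = s1 A := by
  haveI : Nonempty (Fin n) := Fin.pos_iff_nonempty.mp hn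
  obtain ⟨i, hi⟩ := Finite.exists_min (Matrix.isHermitian_transpose_mul_self A).eigenvalues
  exact ⟨i, le_antisymm (le_ciInf hi) (ciInf_le (Set.finite_range _).bddBelow i)⟩

lemma rayleigh (hn : 0 < n) (A : Matrix (Fin m) (Fin n) ℝ) (v : Fin n → ℝ) :
    s1 A * ∑ j, v j ^ 2 ≤ v ⬝ᵥ ((Aᵀ * A) *ᵥ v) := by
  haveI : Nonempty (Fin n) := Fin.pos_iff_nonempty.mp hn
  have hH := Matrix.isHermitian_transpose_mul_self A
  set U : Matrix (Fin n) (Fin n) ℝ := (hH.eigenvectorUnitary : Matrix (Fin n) (Fin n) ℝ) with hUdef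
  have hUU : U * star U = 1 := (Matrix.mem_unitaryGroup_iff).mp hH.eigenvectorUnitary.2
  set w : Fin n → ℝ := star U *ᵥ v with hwdef
  have hvec : v ᵥ* U = w := by
    funext j
    simp [hwdef, Matrix.vecMul, Matrix.mulVec, dotProduct, Matrix.star_apply, mul_comm]
  have hBv : (Aᵀ * A) *ᵥ v = U *ᵥ ((Matrix.diagonal hH.eigenvalues) *ᵥ w) := by
    conv_lhs => rw [show Aᵀ * A = U * Matrix.diagonal (RCLike.ofReal ∘ hH.eigenvalues) * star U from hH.spectral_theorem]
    simp [Matrix.mulVec_mulVec, hwdef, Matrix.mul_assoc, RCLike.ofReal]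
  have hquad : v ⬝ᵥ ((Aᵀ * A) *ᵥ v) = ∑ i, hH.eigenvalues i * w i ^ 2 := by
    rw [hBv, Matrix.dotProduct_mulVec, hvec]
    simp [Matrix.mulVec_diagonal, dotProduct]
    ring_nf
    exact Finset.sum_congr rfl fun i _ => by ring
  have hUw : U *ᵥ w = v := by
    rw [hwdef, Matrix.mulVec_mulVec, hUU, Matrix.one_mulVec]
  have hws : ∑ j, w j ^ 2 = ∑ j, v j ^ 2 := by
    have h1 : ∑ j, w j ^ 2 = w ⬝ᵥ w := by simp [dotProduct, sq]
    have h2 : w ⬝ᵥ w = (v ᵥ* U) ⬝ᵥ w := by rw [hvec]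
    rw [h1, h2, ← Matrix.dotProduct_mulVec, hUw]
    simp [dotProduct, sq]
  rw [hquad, ← hws]
  have hle : ∀ i : Fin n, s1 A * w i ^ 2 ≤ hH.eigenvalues i * w i ^ 2 := fun i =>
    mul_le_mul_of_nonneg_right (s1_le A i) (sq_nonneg _)
  calc s1 A * ∑ j, w j ^ 2 = ∑ j, s1 A * w j ^ 2 := by rw [Finset.mul_sum]
    _ ≤ ∑ j, hH.eigenvalues j * w j ^ 2 := Finset.sum_le_sum fun i _ => hle i

end aux

section aux2

variable {m n : ℕ}

lemma exists_unit_eigvec (hn : 0 < n) (A : Matrix (Fin m) (Fin n) ℝ) :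
    ∃ v : Fin n → ℝ, (∑ j, v j ^ 2 = 1) ∧ (Aᵀ * A) *ᵥ v = s1 A • v := by
  have hH := Matrix.isHermitian_transpose_mul_self A
  obtain ⟨i, hi⟩ := exists_s1_eq hn A
  refine ⟨⇑(hH.eigenvectorBasis i), ?_, ?_⟩
  · have hnorm : ‖hH.eigenvectorBasis i‖ = 1 := hH.eigenvectorBasis.orthonormal.1 i
    rw [EuclideanSpace.norm_eq] at hnorm
    have h2 : ∑ j, ‖(hH.eigenvectorBasis i) j‖ ^ 2 = 1 := Real.sqrt_eq_one.mp hnorm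
    simpa [Real.norm_eq_abs, sq_abs] using h2
  · have h := hH.mulVec_eigenvectorBasis i
    rw [hi] at h
    exact h

lemma s1_pos (hn : 0 < n) (A : Matrix (Fin m) (Fin n) ℝ) (hA : IsUnit (Aᵀ * A).det) :
    0 < s1 A := by
  obtain ⟨i, hi⟩ := exists_s1_eq hn A
  have hdet : (Aᵀ * A).det = ∏ j, (Matrix.isHermitian_transpose_mul_self A).eigenvalues j := by
    simpa using (Matrix.isHermitian_transpose_mul_self A).det_eq_prod_eigenvalues
  have hne0 : (∏ j, (Matrix.isHermitian_transpose_mul_self A).eigenvalues j) ≠ 0 := by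
    rw [← hdet]; exact hA.ne_zero
  have hne : ∀ j, (Matrix.isHermitian_transpose_mul_self A).eigenvalues j ≠ 0 :=
    fun j => Finset.prod_ne_zero_iff.mp hne0 j (Finset.mem_univ j)
  rw [← hi]
  exact lt_of_le_of_ne (Matrix.eigenvalues_conjTranspose_mul_self_nonneg A i) (Ne.symm (hne i))

lemma key_bound (hn : 0 < n) (A : Matrix (Fin m) (Fin n) ℝ) (hA : IsUnit (Aᵀ * A).det)
    (G : Fin m → ℝ) :
    enorm2 (((Aᵀ * A)⁻¹ * Aᵀ) *ᵥ G) ≤ Real.sqrt ((s1 A)⁻¹) * ∑ i, |G i| := by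
  set v := ((Aᵀ * A)⁻¹ * Aᵀ) *ᵥ G with hv
  have hs1 := s1_pos hn A hA
  have hnormal : (Aᵀ * A) *ᵥ v = Aᵀ *ᵥ G := by
    rw [hv, Matrix.mulVec_mulVec, ← Matrix.mul_assoc, Matrix.mul_nonsing_inv _ hA, Matrix.one_mul]
  set t := v ⬝ᵥ ((Aᵀ * A) *ᵥ v) with ht
  have htAv : t = (A *ᵥ v) ⬝ᵥ (A *ᵥ v) := by
    rw [ht, ← Matrix.mulVec_mulVec, Matrix.dotProduct_mulVec, Matrix.vecMul_transpose]
  have htG : t = (A *ᵥ v) ⬝ᵥ G := by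
    rw [ht, hnormal, Matrix.dotProduct_mulVec, Matrix.vecMul_transpose]
  set S := ∑ i, G i ^ 2 with hS
  have hSnn : 0 ≤ S := Finset.sum_nonneg fun i _ => sq_nonneg _
  have htnn : 0 ≤ t := by
    rw [htAv]; exact Finset.sum_nonneg fun i _ => mul_self_nonneg _
  have hcs : t ^ 2 ≤ t * S := by
    have := Finset.sum_mul_sq_le_sq_mul_sq Finset.univ (fun i => (A *ᵥ v) i) G
    calc t ^ 2 = ((A *ᵥ v) ⬝ᵥ G) ^ 2 := by rw [htG]
      _ ≤ (∑ i, (A *ᵥ v) i ^ 2) * ∑ i, G i ^ 2 := by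
          simpa [dotProduct] using this
      _ = t * S := by
          have ht2 : ∑ i, (A *ᵥ v) i ^ 2 = t := by rw [htAv]; simp [dotProduct, sq]
          rw [ht2, hS]
  have htS : t ≤ S := by nlinarith
  have hray := rayleigh hn A v
  have hvS : ∑ j, v j ^ 2 ≤ (s1 A)⁻¹ * S := by
    rw [le_inv_mul_iff₀ hs1]
    calc s1 A * ∑ j, v j ^ 2 ≤ t := hray
      _ ≤ S := htS
  have h1 : enorm2 v ≤ Real.sqrt ((s1 A)⁻¹ * S) := Real.sqrt_le_sqrt hvS
  have h2 : Real.sqrt ((s1 A)⁻¹ * S) = Real.sqrt ((s1 A)⁻¹) * Real.sqrt S := Real.sqrt_mul (by positivity) S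
  have h3 : Real.sqrt S ≤ ∑ i, |G i| := by
    have hSabs : S = ∑ i, |G i| ^ 2 := by simp [hS, sq_abs]
    have := Finset.sum_sq_le_sq_sum_of_nonneg (s := Finset.univ) (f := fun i => |G i|)
      (fun i _ => abs_nonneg (G i))
    calc Real.sqrt S ≤ Real.sqrt ((∑ i, |G i|) ^ 2) := Real.sqrt_le_sqrt (by rw [hSabs]; exact this)
      _ = ∑ i, |G i| := Real.sqrt_sq (Finset.sum_nonneg fun i _ => abs_nonneg _)
  calc enorm2 v ≤ Real.sqrt ((s1 A)⁻¹) * Real.sqrt S := by rw [← h2]; exact h1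
    _ ≤ Real.sqrt ((s1 A)⁻¹) * ∑ i, |G i| :=
        mul_le_mul_of_nonneg_left h3 (Real.sqrt_nonneg _)

end aux2

section aux3

variable {m n : ℕ}

def rq (A : Matrix (Fin m) (Fin n) ℝ) (w : Fin n → ℝ) : ℝ :=
  (w ⬝ᵥ ((Aᵀ * A) *ᵥ w)) / (∑ j, w j ^ 2)

lemma rq_lower (hn : 0 < n) (A : Matrix (Fin m) (Fin n) ℝ) {w : Fin n → ℝ}
    (hw : ∃ j, w j ≠ 0) : s1 A ≤ rq A w := by
  have hS : 0 < ∑ j, w j ^ 2 := by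
    obtain ⟨j, hj⟩ := hw
    exact Finset.sum_pos' (fun k _ => sq_nonneg _) ⟨j, Finset.mem_univ j, by positivity⟩
  rw [rq, le_div_iff₀ hS]
  exact rayleigh hn A w

lemma s1_eq_iInf_rq (hn : 0 < n) (A : Matrix (Fin m) (Fin n) ℝ) :
    s1 A = ⨅ v : {v : Fin n → ℚ // v ≠ 0}, rq A (fun j => (v.1 j : ℝ)) := by
  haveI : Nonempty (Fin n) := Fin.pos_iff_nonempty.mp hn
  have hlow : ∀ v : {v : Fin n → ℚ // v ≠ 0}, s1 A ≤ rq A (fun j => (v.1 j : ℝ)) := by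
    rintro ⟨v, hv⟩
    obtain ⟨j, hj⟩ := Function.ne_iff.mp hv
    exact rq_lower hn A ⟨j, by exact_mod_cast hj⟩
  haveI : Nonempty {v : Fin n → ℚ // v ≠ 0} :=
    ⟨⟨fun _ => 1, fun h => one_ne_zero (congrFun h ⟨0, hn⟩)⟩⟩
  refine le_antisymm (le_ciInf hlow) (le_of_forall_pos_le_add fun ε hε => ?_)
  obtain ⟨u, hu1, hu2⟩ := exists_unit_eigvec hn A
  have hnum : Continuous fun w : Fin n → ℝ => w ⬝ᵥ ((Aᵀ * A) *ᵥ w) := by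
    simp only [dotProduct, Matrix.mulVec]
    fun_prop
  have hden : Continuous fun w : Fin n → ℝ => ∑ j, w j ^ 2 := by fun_prop
  have hdenu : (∑ j, u j ^ 2) ≠ 0 := by rw [hu1]; norm_num
  have hφ : ContinuousAt (rq A) u := (hnum.continuousAt).div (hden.continuousAt) hdenu
  have hφu : rq A u = s1 A := by
    rw [rq, hu2, hu1]
    simp [dotProduct_smul, smul_eq_mul]
    have : u ⬝ᵥ u = 1 := by rw [← hu1]; simp [dotProduct, sq]
    simp [this]
  have hev : ∀ᶠ w in nhds u, rq A w < s1 A + ε := by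
    apply Filter.Tendsto.eventually_lt_const _ hφ
    rw [hφu]; linarith
  have hpos : ∀ᶠ w in nhds u, 0 < ∑ j, w j ^ 2 := by
    apply Filter.Tendsto.eventually_const_lt _ (hden.continuousAt)
    show (0:ℝ) < ∑ j, u j ^ 2
    rw [hu1]; norm_num
  have hcomb := hev.and hpos
  rw [Filter.eventually_iff, mem_nhds_iff] at hcomb
  obtain ⟨O, hOsub, hOopen, huO⟩ := hcomb
  have hdense : DenseRange (fun v : Fin n → ℚ => (fun j => (v j : ℝ))) := by
    rw [Metric.denseRange_iff]
    intro x r hr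
    choose qf hq using fun j => exists_rat_near (x j) hr
    exact ⟨qf, by rw [dist_pi_lt_iff hr]; intro j; rw [Real.dist_eq]; exact hq j⟩
  obtain ⟨v, hvO⟩ := hdense.exists_mem_open hOopen ⟨u, huO⟩
  obtain ⟨h1, h2⟩ := hOsub hvO
  have hvne : v ≠ 0 := by
    intro h0
    rw [h0] at h2
    simp at h2
  have hbdd : BddBelow (Set.range fun v : {v : Fin n → ℚ // v ≠ 0} => rq A (fun j => (v.1 j : ℝ))) := by
    refine ⟨s1 A, ?_⟩
    rintro _ ⟨v, rfl⟩
    exact hlow v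
  exact le_trans (ciInf_le hbdd ⟨v, hvne⟩) h1.le

lemma s1_measurable {Ω : Type*} [MeasurableSpace Ω] (hn : 0 < n)
    (γ : Fin n → Ω → ℝ) (hγ : ∀ j, Measurable (γ j)) :
    Measurable fun x : Fin m → Ω => s1 (dmat γ x) := by
  have heq : (fun x : Fin m → Ω => s1 (dmat γ x)) =
      fun x => ⨅ v : {v : Fin n → ℚ // v ≠ 0}, rq (dmat γ x) (fun j => (v.1 j : ℝ)) :=
    funext fun x => s1_eq_iInf_rq hn _
  rw [heq]
  apply Measurable.iInf
  intro v
  apply Measurable.div _ measurable_const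
  simp only [rq, dotProduct, Matrix.mulVec, Matrix.mul_apply, Matrix.transpose_apply,
    dmat, Matrix.of_apply]
  apply Finset.measurable_sum
  intro j _
  apply Measurable.const_mul
  apply Finset.measurable_sum
  intro k _
  apply Measurable.mul_const
  apply Finset.measurable_sum
  intro i _
  exact ((hγ j).comp (measurable_pi_apply i)).mul ((hγ k).comp (measurable_pi_apply i))

end aux3

lemma map_eval_pi' {Ω : Type*} [MeasurableSpace Ω] (μ : Measure Ω) [IsProbabilityMeasure μ]
    {m : ℕ} (i : Fin m) :
    (Measure.pi fun _ : Fin m => μ).map (Function.eval i) = μ := by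
  refine Measure.ext fun s hs => ?_
  rw [Measure.map_apply (measurable_pi_apply i) hs]
  have hpre : (Function.eval i ⁻¹' s : Set (Fin m → Ω)) =
      Set.pi Set.univ (Function.update (fun _ : Fin m => (Set.univ : Set Ω)) i s) := by
    ext x
    simp only [Set.mem_preimage, Set.mem_pi, Set.mem_univ, forall_true_left,
      Function.update_apply, Function.eval]
    constructor
    · intro hx j; by_cases hj : j = i <;> simp [hj, hx]
    · intro hx; have := hx i; simpa using this
  rw [hpre, Measure.pi_pi]
  rw [Fintype.prod_eq_single i fun j hj => by simp [Function.update_apply, hj]]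
  simp


/-- Lemma 1 (a): for `1/p + 1/q = 1` and `g ∈ L^p(Ω,μ)`, if `K_q(Γ) < ∞`
then `E‖R(X)G(X)‖₂ ≤ √n ⬝ m ⬝ √(K_q(Γ)) ⬝ ‖g‖_{L^p(Ω)}`, where
`K_q(Γ) = (E[s₁(Γ(X))^{-q/2}])^{2/q} = ‖s₁(Γ(X))⁻¹‖_{L^{q/2}}`. -/
theorem stmt0 {Ω : Type*} [MeasurableSpace Ω] (μ : Measure Ω) [IsProbabilityMeasure μ]
    (n m : ℕ) (hn : 1 ≤ n) (hm : 1 ≤ m)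
    (γ : Fin n → Ω → ℝ) (hγ : ∀ j, Measurable (γ j))
    (f : Ω → ℝ) (hf : Measurable f)
    (hinv : ∀ᵐ x ∂(Measure.pi fun _ : Fin m => μ), IsUnit ((dmat γ x)ᵀ * dmat γ x).det)
    (p q : ℝ≥0∞) (hp : 1 ≤ p) (hq : 1 ≤ q) (hpq : 1 / p + 1 / q = 1)
    (g : Ω → ℝ) (hgm : Measurable g) (hg : MemLp g p μ)
    (hK : eLpNorm (fun x : Fin m → Ω => (s1 (dmat γ x))⁻¹) (q / 2)
        (Measure.pi fun _ : Fin m => μ) < ⊤) :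
    ∫⁻ x, ENNReal.ofReal (enorm2 (Rmat γ x *ᵥ fun i => g (x i)))
        ∂(Measure.pi fun _ : Fin m => μ)
      ≤ ENNReal.ofReal (Real.sqrt n) * m *
        (eLpNorm (fun x : Fin m → Ω => (s1 (dmat γ x))⁻¹) (q / 2)
          (Measure.pi fun _ : Fin m => μ)) ^ (1 / 2 : ℝ) *
        eLpNorm g p μ := by
  have hnpos : 0 < n := hn
  set π := (Measure.pi fun _ : Fin m => μ) with hπ
  have hs1m : Measurable fun x : Fin m → Ω => s1 (dmat γ x) := s1_measurable hnpos γ hγ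
  have hs1invm : Measurable fun x : Fin m → Ω => (s1 (dmat γ x))⁻¹ := hs1m.inv
  have hs1invnn : ∀ x : Fin m → Ω, 0 ≤ (s1 (dmat γ x))⁻¹ :=
    fun x => inv_nonneg.mpr (s1_nonneg hnpos _)
  set A := eLpNorm (fun x : Fin m → Ω => (s1 (dmat γ x))⁻¹) (q / 2) π with hA
  set B := eLpNorm g p μ with hB
  set H : (Fin m → Ω) → ℝ≥0∞ :=
    fun x => (ENNReal.ofReal ((s1 (dmat γ x))⁻¹)) ^ (1/2 : ℝ) with hHdef
  have hHm : Measurable H := (ENNReal.measurable_ofReal.comp hs1invm).pow_const _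
  have hHnn : H = fun x => ((‖(s1 (dmat γ x))⁻¹‖₊ : ℝ≥0∞)) ^ (1/2 : ℝ) := by
    funext x
    rw [hHdef]
    congr 1
    exact congrArg (· ^ (1/2 : ℝ)) (Real.enorm_eq_ofReal (hs1invnn x)).symm
  set K : Fin m → (Fin m → Ω) → ℝ≥0∞ := fun i x => ENNReal.ofReal |g (x i)| with hKdef
  have hKm : ∀ i, Measurable (K i) :=
    fun i => ENNReal.measurable_ofReal.comp ((hgm.comp (measurable_pi_apply i)).abs)
  have hKnorm : ∀ i x, K i x = (‖g (x i)‖₊ : ℝ≥0∞) := fun i x =>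
    (Real.enorm_eq_ofReal_abs _).symm
  have hmap : ∀ i : Fin m, π.map (Function.eval i) = μ := fun i => map_eval_pi' μ i
  -- Step 1: pointwise bound
  have step1 : ∫⁻ x, ENNReal.ofReal (enorm2 (Rmat γ x *ᵥ fun i => g (x i))) ∂π ≤
      ∫⁻ x, H x * ∑ i, K i x ∂π := by
    refine lintegral_mono_ae ?_
    filter_upwards [hinv] with x hx
    have hkey := key_bound hnpos (dmat γ x) hx (fun i => g (x i))
    calc ENNReal.ofReal (enorm2 (Rmat γ x *ᵥ fun i => g (x i)))
        ≤ ENNReal.ofReal (Real.sqrt ((s1 (dmat γ x))⁻¹) * ∑ i, |g (x i)|) :=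
          ENNReal.ofReal_le_ofReal hkey
      _ = ENNReal.ofReal (Real.sqrt ((s1 (dmat γ x))⁻¹)) *
          ENNReal.ofReal (∑ i, |g (x i)|) := ENNReal.ofReal_mul (Real.sqrt_nonneg _)
      _ = H x * ∑ i, K i x := by
          have e1 : ENNReal.ofReal (Real.sqrt ((s1 (dmat γ x))⁻¹)) = H x := by
            simp only [hHdef]
            rw [Real.sqrt_eq_rpow, ENNReal.ofReal_rpow_of_nonneg (hs1invnn x) (by norm_num)]
          have e2 : ENNReal.ofReal (∑ i, |g (x i)|) = ∑ i, K i x :=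
            ENNReal.ofReal_sum_of_nonneg fun i _ => abs_nonneg _
          rw [e1, e2]
  -- Step 2: swap sum and integral
  have step2 : ∫⁻ x, H x * ∑ i, K i x ∂π = ∑ i, ∫⁻ x, H x * K i x ∂π := by
    have hmul : ∀ x, H x * ∑ i, K i x = ∑ i, H x * K i x := fun x => Finset.mul_sum _ _ _
    simp_rw [hmul]
    exact lintegral_finset_sum _ fun i _ => hHm.mul (hKm i)
  -- Step 3: Hölder per coordinate
  have step3 : ∀ i : Fin m, ∫⁻ x, H x * K i x ∂π ≤ A ^ (1/2 : ℝ) * B := by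
    intro i
    have hq0 : q ≠ 0 := (lt_of_lt_of_le zero_lt_one hq).ne'
    have hp0 : p ≠ 0 := (lt_of_lt_of_le zero_lt_one hp).ne'
    rcases eq_or_ne q ∞ with hqtop | hqfin
    · -- q = ∞, p = 1
      have hp1 : p = 1 := by
        have h1 : 1 / p = 1 := by simpa [hqtop] using hpq
        rw [one_div] at h1
        exact inv_inj.mp (by rw [h1, inv_one])
      have hq2 : q / 2 = ∞ := by
        rw [hqtop]; exact ENNReal.top_div_of_ne_top (by norm_num)
      have hAtop : A = essSup (fun x => ((‖(s1 (dmat γ x))⁻¹‖₊ : ℝ≥0∞))) π := by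
        rw [hA, hq2, eLpNorm_exponent_top, eLpNormEssSup]
        rfl
      have hHss : essSup H π = A ^ (1/2 : ℝ) := by
        rw [hAtop, hHnn]
        exact ((ENNReal.orderIsoRpow (1/2) (by norm_num)).essSup_apply
          (fun x => ((‖(s1 (dmat γ x))⁻¹‖₊ : ℝ≥0∞))) π).symm
      have hAne : A ^ (1/2 : ℝ) ≠ ⊤ := ENNReal.rpow_ne_top_of_nonneg (by norm_num) hK.ne
      have hKint : ∫⁻ x, K i x ∂π = B := by
        rw [hB, hp1, eLpNorm_one_eq_lintegral_enorm, ← hmap i,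
          lintegral_map (by fun_prop) (measurable_pi_apply i)]
        simp_rw [hKnorm i]
        rfl
      calc ∫⁻ x, H x * K i x ∂π ≤ ∫⁻ x, essSup H π * K i x ∂π := by
            refine lintegral_mono_ae ?_
            filter_upwards [ae_le_essSup H] with x hx
            exact mul_le_mul_left hx _
        _ = essSup H π * ∫⁻ x, K i x ∂π := lintegral_const_mul' _ _ (by rw [hHss]; exact hAne)
        _ = A ^ (1/2 : ℝ) * B := by rw [hHss, hKint]
    · rcases eq_or_ne p ∞ with hptop | hpfin
      · -- p = ∞, q = 1
        have hq2 : q / 2 ≠ 0 := by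
          simp only [ne_eq, ENNReal.div_eq_zero_iff, hq0, false_or]
          norm_num
        have hq2top : q / 2 ≠ ∞ := by
          intro h
          rw [ENNReal.div_eq_top] at h
          rcases h with ⟨_, h2⟩ | ⟨h1, _⟩
          · norm_num at h2
          · exact hqfin h1
        have hGm : Measurable fun ω : Ω => (‖g ω‖₊ : ℝ≥0∞) := hgm.nnnorm.coe_nnreal_ennreal
        have hswap : essSup (fun ω : Ω => (‖g ω‖₊ : ℝ≥0∞)) μ =
            essSup ((fun ω : Ω => (‖g ω‖₊ : ℝ≥0∞)) ∘ Function.eval i) π := by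
          conv_lhs => rw [← hmap i]
          exact essSup_map_measure (by rw [hmap i]; exact hGm.aemeasurable)
            (measurable_pi_apply i).aemeasurable
        have hBss : essSup (K i) π = B := by
          rw [hB, hptop, eLpNorm_exponent_top, eLpNormEssSup]
          change essSup (K i) π = essSup (fun ω : Ω => (‖g ω‖₊ : ℝ≥0∞)) μ
          rw [hswap]
          congr 1
          funext x
          exact hKnorm i x
        have hBne : B ≠ ⊤ := by rw [hB]; exact hg.2.ne
        have hA2 : A ^ (1/2 : ℝ) = ∫⁻ x, H x ∂π := by
          have hq1 : q = 1 := by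
            have h1 : 1 / q = 1 := by simpa [hptop] using hpq
            rw [one_div] at h1
            exact inv_inj.mp (by rw [h1, inv_one])
          have htr : (q / 2).toReal = 1 / 2 := by
            rw [ENNReal.toReal_div, hq1]
            norm_num
          rw [hA, eLpNorm_eq_lintegral_rpow_enorm_toReal hq2 hq2top, htr, ← ENNReal.rpow_mul]
          norm_num
          rw [hHnn]
          simp only [one_div]
          rfl
        calc ∫⁻ x, H x * K i x ∂π ≤ ∫⁻ x, H x * essSup (K i) π ∂π := by
              refine lintegral_mono_ae ?_
              filter_upwards [ae_le_essSup (K i)] with x hx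
              exact mul_le_mul_right hx _
          _ = (∫⁻ x, H x ∂π) * essSup (K i) π :=
              lintegral_mul_const' _ _ (by rw [hBss]; exact hBne)
          _ = A ^ (1/2 : ℝ) * B := by rw [hA2, hBss]
      · -- both finite
        have hq2 : q / 2 ≠ 0 := by
          simp only [ne_eq, ENNReal.div_eq_zero_iff, hq0, false_or]
          norm_num
        have hq2top : q / 2 ≠ ∞ := by
          intro h
          rw [ENNReal.div_eq_top] at h
          rcases h with ⟨_, h2⟩ | ⟨h1, _⟩
          · norm_num at h2
          · exact hqfin h1
        have hpne1 : p ≠ 1 := by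
          intro h
          rw [h] at hpq
          simp only [one_div, inv_one] at hpq
          have h0 : (1 : ℝ≥0∞) + q⁻¹ = 1 + 0 := by simpa using hpq
          have : q⁻¹ = 0 := (ENNReal.add_right_inj ENNReal.one_ne_top).mp h0
          exact hqfin (ENNReal.inv_eq_zero.mp this)
        have hqne1 : q ≠ 1 := by
          intro h
          rw [h] at hpq
          simp only [one_div, inv_one] at hpq
          have h0 : (1 : ℝ≥0∞) + p⁻¹ = 1 + 0 := by
            simpa [add_comm] using hpq
          have : p⁻¹ = 0 := (ENNReal.add_right_inj ENNReal.one_ne_top).mp h0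
          exact hpfin (ENNReal.inv_eq_zero.mp this)
        have hprgt1 : 1 < p.toReal := by
          rw [← ENNReal.toReal_one]
          exact (ENNReal.toReal_lt_toReal (by norm_num) hpfin).mpr
            (lt_of_le_of_ne hp (Ne.symm hpne1))
        have hqrgt1 : 1 < q.toReal := by
          rw [← ENNReal.toReal_one]
          exact (ENNReal.toReal_lt_toReal (by norm_num) hqfin).mpr
            (lt_of_le_of_ne hq (Ne.symm hqne1))
        have hconjsum : (p.toReal)⁻¹ + (q.toReal)⁻¹ = 1 := by
          have := congrArg ENNReal.toReal hpq
          rw [ENNReal.toReal_add (by simp [hp0]) (by simp [hq0])] at this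
          simpa [one_div, ENNReal.toReal_inv] using this
        have hconj : (q.toReal).HolderConjugate (p.toReal) :=
          Real.holderConjugate_iff.mpr ⟨hqrgt1, by linarith⟩
        have hH2 := ENNReal.lintegral_mul_le_Lp_mul_Lq π hconj
          hHm.aemeasurable (hKm i).aemeasurable
        have hqr0 : q.toReal ≠ 0 := by positivity
        have comp1 : (∫⁻ x, H x ^ q.toReal ∂π) ^ (1 / q.toReal) = A ^ (1/2 : ℝ) := by
          have htr : (q / 2).toReal = q.toReal / 2 := by rw [ENNReal.toReal_div]; norm_num
          rw [hA, eLpNorm_eq_lintegral_rpow_enorm_toReal hq2 hq2top, htr, ← ENNReal.rpow_mul]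
          have hHq : ∀ x, H x ^ q.toReal = ((‖(s1 (dmat γ x))⁻¹‖₊ : ℝ≥0∞)) ^ (q.toReal / 2) := by
            intro x
            rw [hHnn, ← ENNReal.rpow_mul]
            norm_num
            congr 1
            ring
          simp_rw [hHq]
          congr 1
          field_simp
        have comp2 : (∫⁻ x, K i x ^ p.toReal ∂π) ^ (1 / p.toReal) = B := by
          rw [hB, eLpNorm_eq_lintegral_rpow_enorm_toReal hp0 hpfin, ← hmap i,
            lintegral_map (by fun_prop) (measurable_pi_apply i)]
          simp_rw [hKnorm i]
          rfl
        calc ∫⁻ x, H x * K i x ∂π = ∫⁻ x, (H * K i) x ∂π := rfl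
          _ ≤ (∫⁻ x, H x ^ q.toReal ∂π) ^ (1 / q.toReal) *
              (∫⁻ x, K i x ^ p.toReal ∂π) ^ (1 / p.toReal) := hH2
          _ = A ^ (1/2 : ℝ) * B := by rw [comp1, comp2]
  -- Assemble
  have hone : (1 : ℝ≥0∞) ≤ ENNReal.ofReal (Real.sqrt n) := by
    rw [← ENNReal.ofReal_one]
    exact ENNReal.ofReal_le_ofReal (Real.one_le_sqrt.mpr (by exact_mod_cast hn))
  calc ∫⁻ x, ENNReal.ofReal (enorm2 (Rmat γ x *ᵥ fun i => g (x i))) ∂π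
      ≤ ∫⁻ x, H x * ∑ i, K i x ∂π := step1
    _ = ∑ i, ∫⁻ x, H x * K i x ∂π := step2
    _ ≤ ∑ _i : Fin m, A ^ (1/2 : ℝ) * B := Finset.sum_le_sum fun i _ => step3 i
    _ = (m : ℝ≥0∞) * (A ^ (1/2 : ℝ) * B) := by
        rw [Finset.sum_const, Finset.card_univ, Fintype.card_fin, nsmul_eq_mul]
    _ ≤ ENNReal.ofReal (Real.sqrt n) * m * A ^ (1/2 : ℝ) * B := by
        calc (m : ℝ≥0∞) * (A ^ (1/2 : ℝ) * B)
            = 1 * ((m : ℝ≥0∞) * A ^ (1/2 : ℝ) * B) := by ring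
          _ ≤ ENNReal.ofReal (Real.sqrt n) * ((m : ℝ≥0∞) * A ^ (1/2 : ℝ) * B) :=
              mul_le_mul_left hone _
          _ = ENNReal.ofReal (Real.sqrt n) * m * A ^ (1/2 : ℝ) * B := by ring
end
end

section
/- Let Y be a nonnegative random variable and fix σ ≥ 0. Suppose there exist constants δ > 0 and γ > 0 such that P(Y ≤ ε) ≤ (δε)^γ for all ε ≥ σ. Then for any r > 0 with r ≠ γ and any σ with 0 < σ < δ⁻¹ (and P(Y ≥ σ) > 0), E(Y^{−r} | Y ≥ σ) ≤ (δ^r / (1 − (δσ)^γ)) · ( 1/(1 − r/γ) + (δσ)^{−(r−γ)}/(1 − γ/r) ). -/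
open MeasureTheory ProbabilityTheory ENNReal

/-- Proposition 7, conditional negative moments: if `Y ≥ 0` and
`P(Y ≤ ε) ≤ (δε)^γ` for all `ε ≥ σ` (with `δ, γ > 0`), then for any `r > 0` with
`r ≠ γ` and `0 < σ < δ⁻¹` (with `P(Y ≥ σ) > 0`),
`E(Y^{-r} | Y ≥ σ) ≤ (δ^r/(1 - (δσ)^γ)) ⬝ (1/(1 - r/γ) + (δσ)^{-(r-γ)}/(1 - γ/r))`. -/
theorem stmt10 {Θ : Type*} [MeasurableSpace Θ] (P : Measure Θ) [IsProbabilityMeasure P]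
    (Y : Θ → ℝ) (hYm : Measurable Y) (hY : ∀ θ, 0 ≤ Y θ)
    (σ δ γ : ℝ) (hδ : 0 < δ) (hγ : 0 < γ)
    (h : ∀ ε : ℝ, σ ≤ ε → P {θ | Y θ ≤ ε} ≤ ENNReal.ofReal ((δ * ε) ^ γ))
    (hσ0 : 0 < σ) (hσδ : σ < δ⁻¹) (hpos : 0 < P {θ | σ ≤ Y θ})
    (r : ℝ) (hr0 : 0 < r) (hrγ : r ≠ γ) :
    ∫⁻ θ, ENNReal.ofReal (Y θ) ^ (-r) ∂(P[|{θ | σ ≤ Y θ}])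
      ≤ ENNReal.ofReal (δ ^ r / (1 - (δ * σ) ^ γ) *
          (1 / (1 - r / γ) + (δ * σ) ^ (-(r - γ)) / (1 - γ / r))) := by
  have hrne : r ≠ 0 := hr0.ne'
  have hγne : γ ≠ 0 := hγ.ne'
  have hA : MeasurableSet {θ | σ ≤ Y θ} := hYm measurableSet_Ici
  set A := {θ | σ ≤ Y θ} with hAdef
  have hδσ1 : δ * σ < 1 := by
    calc δ * σ < δ * δ⁻¹ := by exact mul_lt_mul_of_pos_left hσδ hδ
    _ = 1 := mul_inv_cancel₀ hδ.ne'
  have hδσ0 : 0 < δ * σ := mul_pos hδ hσ0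
  have hc1 : (δ * σ) ^ γ < 1 := Real.rpow_lt_one hδσ0.le hδσ1 hγ
  have hc0 : 0 < (δ * σ) ^ γ := Real.rpow_pos_of_pos hδσ0 γ
  set a := δ ^ r with hadef
  set b := σ ^ (-r) with hbdef
  have ha0 : 0 < a := Real.rpow_pos_of_pos hδ r
  have hb0 : 0 < b := Real.rpow_pos_of_pos hσ0 (-r)
  have hab : a < b := by
    have hδσ' : δ < σ⁻¹ := by
      rw [← one_div, lt_div_iff₀ hσ0]; exact hδσ1
    calc a = δ ^ r := rfl
    _ < (σ⁻¹) ^ r := Real.rpow_lt_rpow hδ.le hδσ' hr0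
    _ = b := by rw [Real.inv_rpow hσ0.le, ← Real.rpow_neg hσ0.le]
  set e : ℝ := -(γ / r) with hedef
  have he1 : e + 1 = 1 - γ / r := by ring
  have hene : e ≠ -1 := by
    intro hc
    apply hrγ
    rw [hedef] at hc
    have hγr : γ / r = 1 := by linarith
    field_simp at hγr
    linarith
  have he1ne : e + 1 ≠ 0 := by
    intro hc; apply hene; linarith
  -- pointwise positivity on A
  have hYpos : ∀ θ ∈ A, 0 < Y θ := fun θ hθ => lt_of_lt_of_le hσ0 hθ
  -- Step 1: conditional expectation as scaled restricted integral
  rw [ProbabilityTheory.cond, lintegral_smul_measure]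
  -- Step 2: convert integrand on A
  have hconv : ∫⁻ θ in A, ENNReal.ofReal (Y θ) ^ (-r) ∂P
      = ∫⁻ θ in A, ENNReal.ofReal (Y θ ^ (-r)) ∂P := by
    apply setLIntegral_congr_fun hA
    intro θ hθ
    exact ENNReal.ofReal_rpow_of_pos (hYpos θ hθ)
  rw [hconv]
  -- layer cake
  have hlayer : ∫⁻ θ in A, ENNReal.ofReal (Y θ ^ (-r)) ∂P
      = ∫⁻ t in Set.Ioi (0:ℝ), (P.restrict A) {θ | t < Y θ ^ (-r)} := by
    exact lintegral_eq_lintegral_meas_lt (P.restrict A)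
      (Filter.Eventually.of_forall fun θ => Real.rpow_nonneg (hY θ) _)
      ((hYm.pow measurable_const).aemeasurable)
  rw [hlayer]
  -- the dominating function
  set g : ℝ → ℝ≥0∞ := fun t =>
    if t ≤ a then 1 else if t ≤ b then ENNReal.ofReal (δ ^ γ * t ^ e) else 0 with hgdef
  have hgm : Measurable g := by
    apply Measurable.ite (measurableSet_Iic)
    · exact measurable_const
    · apply Measurable.ite (measurableSet_Iic) _ measurable_const
      exact (measurable_const.mul (measurable_id.pow measurable_const)).ennreal_ofReal
  have hSm : ∀ t : ℝ, MeasurableSet {θ | t < Y θ ^ (-r)} := by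
    intro t
    exact (hYm.pow measurable_const) measurableSet_Ioi
  -- pointwise bound
  have hrinv : -r⁻¹ < 0 := neg_lt_zero.mpr (inv_pos.mpr hr0)
  have hrr : (-r) * (-r⁻¹) = 1 := by field_simp
  have hbound : ∀ t ∈ Set.Ioi (0:ℝ), (P.restrict A) {θ | t < Y θ ^ (-r)} ≤ g t := by
    intro t ht
    have ht0 : (0:ℝ) < t := ht
    rw [Measure.restrict_apply (hSm t)]
    have hkey : ∀ θ, t < Y θ ^ (-r) → σ ≤ Y θ → Y θ < t ^ (-r⁻¹) := by
      intro θ h2 h3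
      have := Real.rpow_lt_rpow_of_neg ht0 h2 hrinv
      rwa [← Real.rpow_mul (hY θ), hrr, Real.rpow_one] at this
    by_cases h1 : t ≤ a
    · simp only [hgdef, if_pos h1]
      exact prob_le_one
    · by_cases h2 : t ≤ b
      · simp only [hgdef, if_neg h1, if_pos h2]
        have hσε : σ ≤ t ^ (-r⁻¹) := by
          have := Real.rpow_le_rpow_of_nonpos ht0 h2 hrinv.le
          rwa [hbdef, ← Real.rpow_mul hσ0.le, hrr, Real.rpow_one] at this
        calc P ({θ | t < Y θ ^ (-r)} ∩ A) ≤ P {θ | Y θ ≤ t ^ (-r⁻¹)} := by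
              apply measure_mono
              rintro θ ⟨h2', h3'⟩
              exact (hkey θ h2' h3').le
          _ ≤ ENNReal.ofReal ((δ * t ^ (-r⁻¹)) ^ γ) := h _ hσε
          _ = ENNReal.ofReal (δ ^ γ * t ^ e) := by
              congr 1
              rw [Real.mul_rpow hδ.le (Real.rpow_nonneg ht0.le _),
                ← Real.rpow_mul ht0.le]
              congr 1
              rw [hedef]; ring
      · simp only [hgdef, if_neg h1, if_neg h2]
        have hempty : {θ | t < Y θ ^ (-r)} ∩ A = ∅ := by
          ext θ
          simp only [Set.mem_inter_iff, Set.mem_empty_iff_false, iff_false, not_and]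
          intro h2' h3'
          have h4 := hkey θ h2' h3'
          have h5 : t ^ (-r⁻¹) < σ := by
            have := Real.rpow_lt_rpow_of_neg hb0 (not_le.mp h2) hrinv
            rwa [hbdef, ← Real.rpow_mul hσ0.le, hrr, Real.rpow_one] at this
          have : σ ≤ Y θ := h3'
          linarith
        rw [hempty]
        simp
  have hXnn : 0 ≤ (b ^ (e+1) - a ^ (e+1)) / (e+1) := by
    rcases lt_or_gt_of_ne (fun hc => hrγ hc.symm : γ ≠ r) with hlt | hgt
    · -- γ < r : e+1 > 0 and a^(e+1) ≤ b^(e+1)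
      have hp : 0 < e + 1 := by
        rw [he1, sub_pos, div_lt_one hr0]; exact hlt
      apply div_nonneg _ hp.le
      have := Real.rpow_le_rpow ha0.le hab.le hp.le
      linarith
    · -- r < γ : e+1 < 0 and b^(e+1) ≤ a^(e+1)
      have hp : e + 1 < 0 := by
        rw [he1, sub_neg, lt_div_iff₀ hr0, one_mul]; exact hgt
      apply div_nonneg_of_nonpos _ hp.le
      have := Real.rpow_lt_rpow_of_neg ha0 hab hp
      linarith
  have hgint : ∫⁻ t in Set.Ioi (0:ℝ), g t
      = ENNReal.ofReal (a + δ ^ γ * ((b ^ (e+1) - a ^ (e+1)) / (e+1))) := by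
    have hsplit : Set.Ioi (0:ℝ) = Set.Ioc 0 a ∪ (Set.Ioc a b ∪ Set.Ioi b) := by
      rw [Set.Ioc_union_Ioi_eq_Ioi hab.le, Set.Ioc_union_Ioi_eq_Ioi ha0.le]
    have hd1 : Disjoint (Set.Ioc (0:ℝ) a) (Set.Ioc a b ∪ Set.Ioi b) := by
      rw [Set.Ioc_union_Ioi_eq_Ioi hab.le]; exact Set.Ioc_disjoint_Ioi_same
    have hd2 : Disjoint (Set.Ioc a b) (Set.Ioi b) := Set.Ioc_disjoint_Ioi_same
    rw [hsplit, lintegral_union (measurableSet_Ioc.union measurableSet_Ioi) hd1,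
        lintegral_union measurableSet_Ioi hd2]
    have hp1 : ∫⁻ t in Set.Ioc (0:ℝ) a, g t = ENNReal.ofReal a := by
      rw [setLIntegral_congr_fun measurableSet_Ioc
        (fun ⦃t⦄ (ht : t ∈ Set.Ioc (0:ℝ) a) =>
          (if_pos ht.2 : g t = 1)), setLIntegral_one, Real.volume_Ioc, sub_zero]
    have hp3 : ∫⁻ t in Set.Ioi b, g t = 0 := by
      rw [setLIntegral_congr_fun measurableSet_Ioi
        (fun ⦃t⦄ (ht : t ∈ Set.Ioi b) => ?_), lintegral_zero]
      show g t = 0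
      have h1 : ¬ t ≤ a := not_le.mpr (hab.trans ht)
      have h2 : ¬ t ≤ b := not_le.mpr ht
      simp only [hgdef, if_neg h1, if_neg h2]
    have hp2 : ∫⁻ t in Set.Ioc a b, g t
        = ENNReal.ofReal (δ ^ γ * ((b ^ (e+1) - a ^ (e+1)) / (e+1))) := by
      rw [setLIntegral_congr_fun measurableSet_Ioc
        (fun ⦃t⦄ (ht : t ∈ Set.Ioc a b) =>
          (by simp only [hgdef, if_neg (not_le.mpr ht.1), if_pos ht.2] :
            g t = ENNReal.ofReal (δ ^ γ * t ^ e)))]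
      have hnotin : (0:ℝ) ∉ Set.uIcc a b := by
        rw [Set.uIcc_of_le hab.le]
        intro hc
        exact absurd hc.1 (not_le.mpr ha0)
      have hint : IntegrableOn (fun t : ℝ => δ ^ γ * t ^ e) (Set.Ioc a b) := by
        rw [← intervalIntegrable_iff_integrableOn_Ioc_of_le hab.le]
        exact (intervalIntegral.intervalIntegrable_rpow (Or.inr hnotin)).const_mul _
      rw [← ofReal_integral_eq_lintegral_ofReal hint]
      · congr 1
        rw [← intervalIntegral.integral_of_le hab.le, intervalIntegral.integral_const_mul,
          integral_rpow (Or.inr ⟨hene, hnotin⟩)]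
      · rw [Filter.EventuallyLE, ae_restrict_iff' measurableSet_Ioc]
        filter_upwards with t ht
        have ht0 : 0 < t := ha0.trans ht.1
        exact mul_nonneg (Real.rpow_nonneg hδ.le _) (Real.rpow_nonneg ht0.le _)
    rw [hp1, hp2, hp3, add_zero, ← ENNReal.ofReal_add ha0.le
      (mul_nonneg (Real.rpow_nonneg hδ.le _) hXnn)]
  calc (P A)⁻¹ * ∫⁻ t in Set.Ioi (0:ℝ), (P.restrict A) {θ | t < Y θ ^ (-r)}
      ≤ (P A)⁻¹ * ∫⁻ t in Set.Ioi (0:ℝ), g t :=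
        mul_le_mul_right (setLIntegral_mono hgm hbound) _
    _ ≤ (ENNReal.ofReal (1 - (δ*σ)^γ))⁻¹ *
        ENNReal.ofReal (a + δ ^ γ * ((b ^ (e+1) - a ^ (e+1)) / (e+1))) := by
        rw [hgint]
        apply mul_le_mul_left
        apply ENNReal.inv_le_inv.mpr
        have hcompl : P Aᶜ ≤ ENNReal.ofReal ((δ * σ) ^ γ) := by
          refine le_trans (measure_mono ?_) (h σ le_rfl)
          intro θ hθ
          simp only [hAdef, Set.mem_compl_iff, Set.mem_setOf_eq, not_le] at hθ
          exact le_of_lt hθ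
        have h1 : (1 : ℝ≥0∞) ≤ P A + ENNReal.ofReal ((δ * σ) ^ γ) := by
          rw [← prob_add_prob_compl (μ := P) hA]
          exact add_le_add_right hcompl _
        calc ENNReal.ofReal (1 - (δ*σ)^γ)
            = 1 - ENNReal.ofReal ((δ*σ)^γ) := by
              rw [ENNReal.ofReal_sub _ hc0.le, ENNReal.ofReal_one]
          _ ≤ (P A + ENNReal.ofReal ((δ*σ)^γ)) - ENNReal.ofReal ((δ*σ)^γ) :=
              tsub_le_tsub_right h1 _
          _ = P A := ENNReal.add_sub_cancel_right ENNReal.ofReal_ne_top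
    _ ≤ ENNReal.ofReal (δ ^ r / (1 - (δ * σ) ^ γ) *
          (1 / (1 - r / γ) + (δ * σ) ^ (-(r - γ)) / (1 - γ / r))) := by
        have hc1' : 0 < 1 - (δ*σ)^γ := by linarith
        rw [← ENNReal.ofReal_inv_of_pos hc1', ← ENNReal.ofReal_mul (by positivity)]
        apply ENNReal.ofReal_le_ofReal
        apply le_of_eq
        have hb1 : b ^ (e+1) = σ ^ (γ - r) := by
          rw [hbdef, ← Real.rpow_mul hσ0.le]
          congr 1
          rw [he1]
          field_simp
          ring
        have ha1 : a ^ (e+1) = δ ^ (r - γ) := by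
          rw [hadef, ← Real.rpow_mul hδ.le]
          congr 1
          rw [he1]
          field_simp
        have hmul : (δ*σ) ^ γ = δ ^ γ * σ ^ γ := Real.mul_rpow hδ.le hσ0.le
        have hmul2 : (δ*σ) ^ (-(r-γ)) = δ ^ (γ-r) * σ ^ (γ-r) := by
          rw [show -(r-γ) = γ - r by ring, Real.mul_rpow hδ.le hσ0.le]
        have hδr : (δ:ℝ) ^ r = δ ^ γ * δ ^ (r-γ) := by
          rw [← Real.rpow_add hδ]; congr 1; ring
        have hdd : (δ:ℝ) ^ (γ-r) = (δ ^ (r-γ))⁻¹ := by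
          rw [← Real.rpow_neg hδ.le]; congr 1; ring
        have h1r : (1:ℝ) - γ/r ≠ 0 := by
          intro hc
          apply hrγ
          have : γ / r = 1 := by linarith
          field_simp at this
          linarith
        have h1g : (1:ℝ) - r/γ ≠ 0 := by
          intro hc
          apply hrγ
          have : r / γ = 1 := by linarith
          field_simp at this
          linarith
        have hvne : (δ:ℝ) ^ (r-γ) ≠ 0 := (Real.rpow_pos_of_pos hδ _).ne'
        have hcne : (1:ℝ) - (δ*σ)^γ ≠ 0 := hc1'.ne'
        have hsub : r - γ ≠ 0 := sub_ne_zero.mpr hrγ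
        have hsub2 : γ - r ≠ 0 := sub_ne_zero.mpr (Ne.symm hrγ)
        rw [hb1, ha1, hmul2, hdd, hadef, hδr, he1]
        rw [hmul] at hcne ⊢
        rw [show (1:ℝ) - γ/r = (r-γ)/r by field_simp,
            show (1:ℝ) - r/γ = (γ-r)/γ by field_simp]
        field_simp
        ring
end
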